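/- arXiv:1507.02707 — 2 statements merged into one kernel-verified Lean document; each statement's English description precedes it below -/
import Mathlib

section
/- Let (Ω, F, μ) be a probability space with filtration (F_n), let 2 ≤ q < ∞, and let (f_n) be a sequence of nonnegative functions with f_n ∈ L^{q}(Ω). Then ‖Σ_n E[f_n | F_n]‖_q ≤ C_q ‖Σ_n f_n‖_q for a constant C_q depending only on q. -/
open MeasureTheory ENNReal Finset

lemma aux_rpow_sub {q : ℝ} (hq : 1 ≤ q) {a b : ℝ} (hb : 0 ≤ b) (hba : b ≤ a) :
    a ^ q - b ^ q ≤ q * a ^ (q - 1) * (a - b) := by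
  have ha : 0 ≤ a := hb.trans hba
  rcases eq_or_lt_of_le ha with h0 | ha0
  · have hb0 : b = 0 := le_antisymm (hba.trans h0.symm.le) hb
    simp [← h0, hb0, Real.zero_rpow (by positivity : q ≠ 0)]
  · set t : ℝ := b / a with ht
    have ht0 : 0 ≤ t := by positivity
    have hbern : 1 + q * (t - 1) ≤ t ^ q := by
      have := one_add_mul_self_le_rpow_one_add (s := t - 1) (by linarith) hq
      simpa using this
    have hbt : b = a * t := by rw [ht]; field_simp
    have hbq : b ^ q = a ^ q * t ^ q := by rw [hbt, Real.mul_rpow ha0.le ht0]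
    have haq : a ^ q = a ^ (q - 1) * a := by
      rw [← Real.rpow_add_one (ne_of_gt ha0)]; ring_nf
    have haqpos : 0 < a ^ q := Real.rpow_pos_of_pos ha0 q
    have key : a ^ q - b ^ q ≤ q * a ^ q * (1 - t) := by
      rw [hbq]
      nlinarith [mul_le_mul_of_nonneg_left hbern haqpos.le]
    calc a ^ q - b ^ q ≤ q * a ^ q * (1 - t) := key
      _ = q * a ^ (q - 1) * (a - b) := by rw [haq, hbt]; ring

lemma aux_clip_sub {M x y : ℝ} (hxy : x ≤ y) :
    min (max y 0) M - min (max x 0) M ≤ y - x := by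
  simp only [min_def, max_def]
  split_ifs <;> linarith

/-- The commutative dual Doob inequality: for `2 ≤ q < ∞` there is a constant `C_q`,
depending only on `q`, such that for any probability space with filtration `ℱ` and any
finite sequence of nonnegative functions `f_n ∈ L^q`,
`‖Σ_n E[f_n | ℱ n]‖_q ≤ C_q ‖Σ_n f_n‖_q`. -/
theorem stmt_6 (q : ℝ) (hq : 2 ≤ q) :
    ∃ C : ℝ, 0 < C ∧
      ∀ (Ω : Type) (m : MeasurableSpace Ω) (μ : Measure Ω), IsProbabilityMeasure μ →
        ∀ (ℱ : Filtration ℕ m) (f : ℕ → Ω → ℝ) (N : ℕ),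
          (∀ n, 0 ≤ f n) → (∀ n, MemLp (f n) (ENNReal.ofReal q) μ) →
          eLpNorm (fun ω => ∑ n ∈ Finset.range N, (μ[f n|ℱ n]) ω) (ENNReal.ofReal q) μ
            ≤ ENNReal.ofReal C *
              eLpNorm (fun ω => ∑ n ∈ Finset.range N, f n ω) (ENNReal.ofReal q) μ := by
  have hq0 : (0:ℝ) < q := by linarith
  have hq1 : (1:ℝ) ≤ q := by linarith
  have hq1' : (1:ℝ) ≤ q - 1 := by linarith
  refine ⟨q, hq0, ?_⟩
  intro Ω m μ hprob ℱ f N hf0 hfq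
  haveI := hprob
  set p : ℝ≥0∞ := ENNReal.ofReal q with hp
  have hptoReal : p.toReal = q := ENNReal.toReal_ofReal hq0.le
  have hp0 : p ≠ 0 := by simp [hp, ENNReal.ofReal_eq_zero]; linarith
  have hp_top : p ≠ ∞ := ENNReal.ofReal_ne_top
  have hp1 : (1:ℝ≥0∞) ≤ p := by
    rw [hp, ← ENNReal.ofReal_one]; exact ENNReal.ofReal_le_ofReal hq1
  -- notation
  set e : ℕ → Ω → ℝ := fun n => μ[f n|ℱ n] with he
  have hfint : ∀ n, Integrable (f n) μ := fun n => (hfq n).integrable hp1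
  set g : ℕ → Ω → ℝ := fun k ω => ∑ n ∈ Finset.range k, e n ω with hg
  set F : Ω → ℝ := fun ω => ∑ n ∈ Finset.range N, f n ω with hF
  have hF_nonneg : ∀ ω, 0 ≤ F ω := fun ω => Finset.sum_nonneg fun n _ => hf0 n ω
  have hF_mem : MemLp F p μ := memLp_finsetSum _ (fun n _ => hfq n)
  -- a.e. nonnegativity of conditional expectations
  have hae : ∀ᵐ ω ∂μ, ∀ n, 0 ≤ e n ω := ae_all_iff.mpr fun n => condExp_nonneg (ae_of_all _ fun ω => hf0 n ω)
  -- strong measurability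
  have he_meas : ∀ n, StronglyMeasurable[ℱ n] (e n) := fun n => stronglyMeasurable_condExp
  have hg_meas : ∀ k, StronglyMeasurable[ℱ k] (g (k + 1)) := by
    intro k
    exact Finset.stronglyMeasurable_fun_sum _ fun i hi =>
      (he_meas i).mono (ℱ.mono (Finset.mem_range_succ_iff.mp hi))
  have hg_measm : ∀ k, StronglyMeasurable (g k) := by
    intro k
    exact Finset.stronglyMeasurable_fun_sum _ fun i hi => ((he_meas i).mono (ℱ.le i))
  -- g monotone on the good set
  have hg_mono : ∀ ω, (∀ n, 0 ≤ e n ω) → ∀ {j k : ℕ}, j ≤ k → g j ω ≤ g k ω := by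
    intro ω hω j k hjk
    exact Finset.sum_le_sum_of_subset_of_nonneg (Finset.range_subset_range.mpr hjk)
      (fun i _ _ => hω i)
  -- real quantities
  set X : ℝ := ∫ ω, F ω ^ q ∂μ with hX
  have hX0 : 0 ≤ X := integral_nonneg fun ω => Real.rpow_nonneg (hF_nonneg ω) q
  set Br : ℝ := X ^ (1 / q) with hBr
  have hBr0 : 0 ≤ Br := Real.rpow_nonneg hX0 _
  -- the truncated main estimate
  have hq1pos : (0:ℝ) < q - 1 := by linarith
  have cont_rpow : ∀ r : ℝ, 0 < r → Continuous fun x : ℝ => x ^ r := by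
    intro r hr
    rw [continuous_iff_continuousAt]
    exact fun x => Real.continuousAt_rpow_const x r (Or.inr hr.le)
  have key : ∀ M : ℕ, ∫ ω, (min (max (g N ω) 0) (M : ℝ)) ^ q ∂μ ≤ (q * Br) ^ q := by
    intro M
    set c : ℝ := (M : ℝ) with hc_def
    have hc : (0:ℝ) ≤ c := Nat.cast_nonneg M
    set h : ℕ → Ω → ℝ := fun k ω => min (max (g k ω) 0) c with hh
    show ∫ ω, h N ω ^ q ∂μ ≤ (q * Br) ^ q
    have h_nonneg : ∀ k ω, 0 ≤ h k ω := fun k ω => le_min (le_max_right _ _) hc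
    have h_le_c : ∀ k ω, h k ω ≤ c := fun k ω => min_le_right _ _
    have h_zero : ∀ ω, h 0 ω = 0 := by
      intro ω; simp [hh, hg, min_eq_left hc]
    have hclip : Continuous fun x : ℝ => min (max x 0) c :=
      (continuous_id.max continuous_const).min continuous_const
    have h_smk : ∀ k, StronglyMeasurable[ℱ k] (h (k+1)) := fun k =>
      hclip.comp_stronglyMeasurable (hg_meas k)
    have h_sm : ∀ k, StronglyMeasurable (h k) := fun k =>
      hclip.comp_stronglyMeasurable (hg_measm k)
    have h_rpow_sm : ∀ (k : ℕ) (r : ℝ), 0 < r →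
        AEStronglyMeasurable (fun ω => h k ω ^ r) μ := fun k r hr =>
      ((cont_rpow r hr).comp_stronglyMeasurable (h_sm k)).aestronglyMeasurable
    have h_rpow_bd : ∀ (k : ℕ) (r : ℝ) (ω : Ω), 0 ≤ r → ‖h k ω ^ r‖ ≤ c ^ r := by
      intro k r ω hr
      rw [Real.norm_of_nonneg (Real.rpow_nonneg (h_nonneg k ω) r)]
      exact Real.rpow_le_rpow (h_nonneg k ω) (h_le_c k ω) hr
    have h_rpow_int : ∀ (k : ℕ) (r : ℝ), 0 < r → Integrable (fun ω => h k ω ^ r) μ := by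
      intro k r hr
      exact (memLp_top_of_bound (h_rpow_sm k r hr) (c ^ r)
        (ae_of_all _ fun ω => h_rpow_bd k r ω hr.le)).integrable le_top
    have intφf : ∀ j k : ℕ, Integrable (fun ω => h j ω ^ (q-1) * f k ω) μ := fun j k =>
      (hfint k).bdd_mul (h_rpow_sm j (q-1) hq1pos)
        (ae_of_all _ fun ω => h_rpow_bd j (q-1) ω hq1pos.le)
    -- telescoping
    have tele : ∫ ω, h N ω ^ q ∂μ
        = ∑ k ∈ Finset.range N, ((∫ ω, h (k+1) ω ^ q ∂μ) - ∫ ω, h k ω ^ q ∂μ) := by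
      rw [Finset.sum_range_sub (fun k => ∫ ω, h k ω ^ q ∂μ)]
      have h00 : ∫ ω, h 0 ω ^ q ∂μ = 0 := by
        simp [h_zero, Real.zero_rpow hq0.ne']
      rw [h00, sub_zero]
    -- one-step estimate
    have step : ∀ k, k < N →
        (∫ ω, h (k+1) ω ^ q ∂μ) - (∫ ω, h k ω ^ q ∂μ)
          ≤ q * ∫ ω, h N ω ^ (q-1) * f k ω ∂μ := by
      intro k hkN
      have intφe : Integrable (fun ω => h (k+1) ω ^ (q-1) * e k ω) μ :=
        integrable_condExp.bdd_mul (h_rpow_sm (k+1) (q-1) hq1pos)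
          (ae_of_all _ fun ω => h_rpow_bd (k+1) (q-1) ω hq1pos.le)
      have pt : ∀ᵐ ω ∂μ, h (k+1) ω ^ q - h k ω ^ q
          ≤ q * (h (k+1) ω ^ (q-1) * e k ω) := by
        filter_upwards [hae] with ω hω
        have hmono : g k ω ≤ g (k+1) ω := hg_mono ω hω (Nat.le_succ k)
        have hba : h k ω ≤ h (k+1) ω :=
          min_le_min (max_le_max hmono le_rfl) le_rfl
        have hgs : g (k+1) ω - g k ω = e k ω := by
          simp [hg, Finset.sum_range_succ]
        have hsub : h (k+1) ω - h k ω ≤ e k ω := by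
          have := aux_clip_sub (M := c) hmono
          simp only [hh]
          linarith
        have h1 := aux_rpow_sub hq1 (h_nonneg k ω) hba
        have hrp : (0:ℝ) ≤ q * h (k+1) ω ^ (q-1) :=
          mul_nonneg hq0.le (Real.rpow_nonneg (h_nonneg (k+1) ω) _)
        nlinarith [mul_le_mul_of_nonneg_left hsub hrp]
      have step1 : (∫ ω, h (k+1) ω ^ q ∂μ) - ∫ ω, h k ω ^ q ∂μ
          = ∫ ω, (h (k+1) ω ^ q - h k ω ^ q) ∂μ :=
        (integral_sub (h_rpow_int (k+1) q hq0) (h_rpow_int k q hq0)).symm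
      have step2 : ∫ ω, (h (k+1) ω ^ q - h k ω ^ q) ∂μ
          ≤ ∫ ω, q * (h (k+1) ω ^ (q-1) * e k ω) ∂μ :=
        integral_mono_ae ((h_rpow_int (k+1) q hq0).sub (h_rpow_int k q hq0))
          (intφe.const_mul q) pt
      have step3 : ∫ ω, q * (h (k+1) ω ^ (q-1) * e k ω) ∂μ
          = q * ∫ ω, h (k+1) ω ^ (q-1) * e k ω ∂μ := integral_const_mul q _
      have pull : ∫ ω, h (k+1) ω ^ (q-1) * e k ω ∂μ
          = ∫ ω, h (k+1) ω ^ (q-1) * f k ω ∂μ := by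
        have hsm : StronglyMeasurable[ℱ k] (fun ω => h (k+1) ω ^ (q-1)) :=
          (cont_rpow (q-1) hq1pos).comp_stronglyMeasurable (h_smk k)
        have hmul := condExp_mul_of_stronglyMeasurable_left (m := ℱ k) (μ := μ) hsm
          (intφf (k+1) k) (hfint k)
        calc ∫ ω, h (k+1) ω ^ (q-1) * e k ω ∂μ
            = ∫ ω, ((fun ω => h (k+1) ω ^ (q-1)) * μ[f k|ℱ k]) ω ∂μ := rfl
          _ = ∫ ω, (μ[(fun ω => h (k+1) ω ^ (q-1)) * f k|ℱ k]) ω ∂μ :=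
              (integral_congr_ae hmul).symm
          _ = ∫ ω, ((fun ω => h (k+1) ω ^ (q-1)) * f k) ω ∂μ :=
              integral_condExp (ℱ.le k)
          _ = ∫ ω, h (k+1) ω ^ (q-1) * f k ω ∂μ := rfl
      have mono2 : ∫ ω, h (k+1) ω ^ (q-1) * f k ω ∂μ
          ≤ ∫ ω, h N ω ^ (q-1) * f k ω ∂μ := by
        refine integral_mono_ae (intφf (k+1) k) (intφf N k) ?_
        filter_upwards [hae] with ω hω
        have hhle : h (k+1) ω ≤ h N ω :=
          min_le_min (max_le_max (hg_mono ω hω hkN) le_rfl) le_rfl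
        exact mul_le_mul_of_nonneg_right
          (Real.rpow_le_rpow (h_nonneg _ ω) hhle hq1pos.le) (hf0 k ω)
      calc (∫ ω, h (k+1) ω ^ q ∂μ) - ∫ ω, h k ω ^ q ∂μ
          = ∫ ω, (h (k+1) ω ^ q - h k ω ^ q) ∂μ := step1
        _ ≤ ∫ ω, q * (h (k+1) ω ^ (q-1) * e k ω) ∂μ := step2
        _ = q * ∫ ω, h (k+1) ω ^ (q-1) * e k ω ∂μ := step3
        _ = q * ∫ ω, h (k+1) ω ^ (q-1) * f k ω ∂μ := by rw [pull]
        _ ≤ q * ∫ ω, h N ω ^ (q-1) * f k ω ∂μ :=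
            mul_le_mul_of_nonneg_left mono2 hq0.le
    -- sum up
    have sum_bound : ∫ ω, h N ω ^ q ∂μ ≤ q * ∫ ω, h N ω ^ (q-1) * F ω ∂μ := by
      rw [tele]
      have hs : ∑ k ∈ Finset.range N, ((∫ ω, h (k+1) ω ^ q ∂μ) - ∫ ω, h k ω ^ q ∂μ)
          ≤ ∑ k ∈ Finset.range N, q * ∫ ω, h N ω ^ (q-1) * f k ω ∂μ :=
        Finset.sum_le_sum fun k hk => step k (Finset.mem_range.mp hk)
      refine hs.trans (le_of_eq ?_)
      rw [← Finset.mul_sum, ← integral_finset_sum _ (fun k _ => intφf N k)]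
      congr 1
      refine integral_congr_ae (ae_of_all _ fun ω => ?_)
      simp only [hF, Finset.mul_sum]
    -- Hölder
    have hconj : Real.HolderConjugate q (q/(q-1)) :=
      Real.HolderConjugate.conjExponent (by linarith)
    have hΦmem : MemLp (fun ω => h N ω ^ (q-1)) (ENNReal.ofReal (q/(q-1))) μ :=
      (memLp_top_of_bound (h_rpow_sm N (q-1) hq1pos) (c ^ (q-1))
        (ae_of_all _ fun ω => h_rpow_bd N (q-1) ω hq1pos.le)).mono_exponent le_top
    have holder := integral_mul_le_Lp_mul_Lq_of_nonneg hconj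
      (ae_of_all _ hF_nonneg)
      (ae_of_all _ fun ω => Real.rpow_nonneg (h_nonneg N ω) (q-1))
      hF_mem hΦmem
    have hrw1 : ∫ ω, (h N ω ^ (q-1)) ^ (q/(q-1)) ∂μ = ∫ ω, h N ω ^ q ∂μ := by
      refine integral_congr_ae (ae_of_all _ fun ω => ?_)
      show (h N ω ^ (q-1)) ^ (q/(q-1)) = h N ω ^ q
      rw [← Real.rpow_mul (h_nonneg N ω)]
      congr 1
      field_simp
    have hoq : 1/(q/(q-1)) = (q-1)/q := one_div_div _ _
    set A : ℝ := ∫ ω, h N ω ^ q ∂μ with hA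
    have hA0 : 0 ≤ A := integral_nonneg fun ω => Real.rpow_nonneg (h_nonneg N ω) q
    have hABr : A ≤ q * (Br * A ^ ((q-1)/q)) := by
      have hcomm : ∫ ω, h N ω ^ (q-1) * F ω ∂μ = ∫ ω, F ω * h N ω ^ (q-1) ∂μ :=
        integral_congr_ae (ae_of_all _ fun ω => mul_comm _ _)
      calc A ≤ q * ∫ ω, h N ω ^ (q-1) * F ω ∂μ := sum_bound
        _ = q * ∫ ω, F ω * h N ω ^ (q-1) ∂μ := by rw [hcomm]
        _ ≤ q * ((∫ ω, F ω ^ q ∂μ) ^ (1/q)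
              * (∫ ω, (h N ω ^ (q-1)) ^ (q/(q-1)) ∂μ) ^ (1/(q/(q-1)))) :=
            mul_le_mul_of_nonneg_left holder hq0.le
        _ = q * (Br * A ^ ((q-1)/q)) := by rw [hrw1, hoq]
    rcases eq_or_lt_of_le hA0 with hA00 | hApos
    · rw [← hA00]
      exact Real.rpow_nonneg (mul_nonneg hq0.le hBr0) q
    · have hsplit : A = A ^ (1/q) * A ^ ((q-1)/q) := by
        rw [← Real.rpow_add hApos]
        rw [show 1/q + (q-1)/q = 1 by field_simp; ring]
        rw [Real.rpow_one]
      have hApow : 0 < A ^ ((q-1)/q) := Real.rpow_pos_of_pos hApos _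
      have hdiv : A ^ (1/q) ≤ q * Br := by
        have h2 : A ^ (1/q) * A ^ ((q-1)/q) ≤ (q * Br) * A ^ ((q-1)/q) := by
          rw [← hsplit]
          calc A ≤ q * (Br * A ^ ((q-1)/q)) := hABr
            _ = (q * Br) * A ^ ((q-1)/q) := by ring
        exact le_of_mul_le_mul_right h2 hApow
      calc A = (A ^ (1/q)) ^ q := by
            rw [← Real.rpow_mul hA0, one_div_mul_cancel hq0.ne', Real.rpow_one]
        _ ≤ (q * Br) ^ q := Real.rpow_le_rpow (Real.rpow_nonneg hA0 _) hdiv hq0.le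
  -- assemble the final inequality
  have hG_eq : eLpNorm (fun ω => ∑ n ∈ Finset.range N, (μ[f n|ℱ n]) ω) p μ
      = eLpNorm (fun ω => max (g N ω) 0) p μ := by
    refine eLpNorm_congr_ae ?_
    filter_upwards [hae] with ω hω
    have h0 : 0 ≤ g N ω := Finset.sum_nonneg fun i _ => hω i
    show (∑ n ∈ Finset.range N, (μ[f n|ℱ n]) ω) = max (g N ω) 0
    rw [max_eq_left h0]
  rw [hG_eq]
  set G : Ω → ℝ := fun ω => max (g N ω) 0 with hG
  have hG_nonneg : ∀ ω, 0 ≤ G ω := fun ω => le_max_right _ _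
  have hG_meas : StronglyMeasurable G := (hg_measm N).sup stronglyMeasurable_const
  have hGm : Measurable G := hG_meas.measurable
  have hRHS : eLpNorm F p μ = ENNReal.ofReal Br := by
    rw [hF_mem.eLpNorm_eq_integral_rpow_norm hp0 hp_top]
    congr 1
    rw [hptoReal]
    have hFX : ∫ a, ‖F a‖ ^ q ∂μ = X :=
      integral_congr_ae (ae_of_all _ fun ω => by
        show ‖F ω‖ ^ q = F ω ^ q
        rw [Real.norm_of_nonneg (hF_nonneg ω)])
    rw [hFX, hBr, one_div]
  rw [hRHS]
  -- monotone convergence in the truncation parameter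
  have hmain : ∫⁻ ω, (‖G ω‖₊ : ℝ≥0∞) ^ q ∂μ ≤ ENNReal.ofReal ((q * Br) ^ q) := by
    have hnn : ∀ ω, ((‖G ω‖₊ : ℝ≥0∞)) = ENNReal.ofReal (G ω) := fun ω => by
      rw [← enorm_eq_nnnorm, ← ofReal_norm, Real.norm_of_nonneg (hG_nonneg ω)]
    have meas : ∀ M : ℕ, Measurable fun ω => (ENNReal.ofReal (min (G ω) (M:ℝ))) ^ q :=
      fun M => (ENNReal.continuous_rpow_const.measurable).comp
        ((hGm.min measurable_const).ennreal_ofReal)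
    have mono : Monotone fun (M : ℕ) (ω : Ω) => (ENNReal.ofReal (min (G ω) (M:ℝ))) ^ q := by
      intro M M' hMM' ω
      exact ENNReal.rpow_le_rpow (ENNReal.ofReal_le_ofReal
        (min_le_min le_rfl (Nat.cast_le.mpr hMM'))) hq0.le
    calc ∫⁻ ω, (‖G ω‖₊ : ℝ≥0∞) ^ q ∂μ
        = ∫⁻ ω, (ENNReal.ofReal (G ω)) ^ q ∂μ :=
          lintegral_congr fun ω => by rw [hnn ω]
      _ = ⨆ M : ℕ, ∫⁻ ω, (ENNReal.ofReal (min (G ω) (M:ℝ))) ^ q ∂μ := by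
          rw [← lintegral_iSup meas mono]
          refine lintegral_congr fun ω => ?_
          refine le_antisymm ?_ ?_
          · refine le_iSup_of_le ⌈G ω⌉₊ (le_of_eq ?_)
            rw [min_eq_left (Nat.le_ceil _)]
          · exact iSup_le fun M => ENNReal.rpow_le_rpow
              (ENNReal.ofReal_le_ofReal (min_le_left _ _)) hq0.le
      _ ≤ ENNReal.ofReal ((q * Br) ^ q) := by
          refine iSup_le fun M => ?_
          have hint : Integrable (fun ω => (min (G ω) (M:ℝ)) ^ q) μ := by
            have hsm : AEStronglyMeasurable (fun ω => (min (G ω) (M:ℝ)) ^ q) μ :=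
              ((cont_rpow q hq0).comp_stronglyMeasurable
                (hG_meas.inf stronglyMeasurable_const)).aestronglyMeasurable
            refine (memLp_top_of_bound hsm ((M:ℝ) ^ q) (ae_of_all _ fun ω => ?_)).integrable le_top
            have h0 : 0 ≤ min (G ω) (M:ℝ) := le_min (hG_nonneg ω) (Nat.cast_nonneg M)
            rw [Real.norm_of_nonneg (Real.rpow_nonneg h0 q)]
            exact Real.rpow_le_rpow h0 (min_le_right _ _) hq0.le
          have heq : ∫⁻ ω, (ENNReal.ofReal (min (G ω) (M:ℝ))) ^ q ∂μ
              = ENNReal.ofReal (∫ ω, (min (G ω) (M:ℝ)) ^ q ∂μ) := by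
            rw [ofReal_integral_eq_lintegral_ofReal hint
              (ae_of_all _ fun ω => Real.rpow_nonneg
                (le_min (hG_nonneg ω) (Nat.cast_nonneg M)) q)]
            refine lintegral_congr fun ω => ?_
            rw [ENNReal.ofReal_rpow_of_nonneg
              (le_min (hG_nonneg ω) (Nat.cast_nonneg M)) hq0.le]
          rw [heq]
          exact ENNReal.ofReal_le_ofReal (key M)
  calc eLpNorm G p μ = (∫⁻ ω, (‖G ω‖₊ : ℝ≥0∞) ^ q ∂μ) ^ (1/q) := by
        simp only [eLpNorm_eq_lintegral_rpow_enorm_toReal hp0 hp_top, hptoReal, enorm_eq_nnnorm]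
    _ ≤ (ENNReal.ofReal ((q * Br) ^ q)) ^ (1/q) :=
        ENNReal.rpow_le_rpow hmain (by positivity)
    _ = ENNReal.ofReal (q * Br) := by
        rw [ENNReal.ofReal_rpow_of_nonneg (by positivity) (by positivity)]
        congr 1
        rw [← Real.rpow_mul (by positivity), mul_one_div_cancel hq0.ne', Real.rpow_one]
    _ = ENNReal.ofReal q * ENNReal.ofReal Br := ENNReal.ofReal_mul hq0.le
end

section
/- Let 1 ≤ p ≤ 2 with 1/p = 1/2 + 1/q, let (a_n^j)_{j,m} be functions with Σ_j λ_j Σ_n ‖a_n^j‖₂² ≤ 1 and (b_n^j) functions with ‖(Σ_n |b_n^j|²)^{1/2}‖_q ≤ 1 for each j, where λ_j ≥ 0 and Σ_j λ_j = 1. Define b_n = (Σ_j λ_j |b_n^j|²)^{1/2} and a_n = Σ_j λ_j a_n^j b_n^j / b_n (interpreted as 0 where b_n = 0). Then Σ_n ‖a_n‖₂² ≤ 1 and ‖(Σ_n |b_n|²)^{1/2}‖_q ≤ 1, and Σ_n a_n b_n = Σ_j λ_j Σ_n a_n^j b_n^j. -/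
open MeasureTheory ENNReal Finset

/-- Commutative version of Lemma 2.1: a convex combination of algebraic `h_p^c`-atoms
can be rewritten as a single atom.  Here `1 ≤ p ≤ 2`, `1/p = 1/2 + 1/q`,
`λ_j ≥ 0` with `Σ_j λ_j = 1`, `Σ_j λ_j Σ_n ‖a_n^j‖₂² ≤ 1`, and
`‖(Σ_n |b_n^j|²)^{1/2}‖_q ≤ 1` for each `j`.  Setting
`b_n = (Σ_j λ_j |b_n^j|²)^{1/2}` and `a_n = Σ_j λ_j a_n^j b_n^j / b_n` (zero where
`b_n = 0`), one has `Σ_n ‖a_n‖₂² ≤ 1`, `‖(Σ_n |b_n|²)^{1/2}‖_q ≤ 1` and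
`Σ_n a_n b_n = Σ_j λ_j Σ_n a_n^j b_n^j`. -/
theorem stmt_9 {Ω : Type*} {m : MeasurableSpace Ω} (μ : Measure Ω) [SigmaFinite μ]
    (p q : ℝ) (hp1 : 1 ≤ p) (hp2 : p ≤ 2) (hpq : 1 / p = 1 / 2 + 1 / q)
    (J N : ℕ) (lam : ℕ → ℝ) (a b : ℕ → ℕ → Ω → ℝ)
    (hlam0 : ∀ j, 0 ≤ lam j) (hlam1 : ∑ j ∈ Finset.range J, lam j = 1)
    (ha : ∑ j ∈ Finset.range J, lam j * ∑ n ∈ Finset.range N, ∫ ω, (a j n ω) ^ 2 ∂μ ≤ 1)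
    (hb : ∀ j ∈ Finset.range J,
      eLpNorm (fun ω => (∑ n ∈ Finset.range N, (b j n ω) ^ 2) ^ ((1 : ℝ) / 2))
        (ENNReal.ofReal q) μ ≤ 1)
    (haL2 : ∀ j n, MemLp (a j n) 2 μ)
    (hbLq : ∀ j n, MemLp (b j n) (ENNReal.ofReal q) μ)
    (B A : ℕ → Ω → ℝ)
    (hB : ∀ n ω, B n ω = (∑ j ∈ Finset.range J, lam j * (b j n ω) ^ 2) ^ ((1 : ℝ) / 2))
    (hA : ∀ n ω, A n ω = if B n ω = 0 then 0
      else (∑ j ∈ Finset.range J, lam j * a j n ω * b j n ω) / B n ω) :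
    (∑ n ∈ Finset.range N, ∫ ω, (A n ω) ^ 2 ∂μ ≤ 1) ∧
    eLpNorm (fun ω => (∑ n ∈ Finset.range N, (B n ω) ^ 2) ^ ((1 : ℝ) / 2))
        (ENNReal.ofReal q) μ ≤ 1 ∧
    ∀ ω, ∑ n ∈ Finset.range N, A n ω * B n ω
        = ∑ j ∈ Finset.range J, lam j * ∑ n ∈ Finset.range N, a j n ω * b j n ω := by
  have hp0 : (0:ℝ) < p := lt_of_lt_of_le one_pos hp1
  have hsum_nn : ∀ n ω, (0:ℝ) ≤ ∑ j ∈ Finset.range J, lam j * (b j n ω) ^ 2 :=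
    fun n ω => Finset.sum_nonneg fun j _ => mul_nonneg (hlam0 j) (sq_nonneg _)
  have hBnn : ∀ n ω, 0 ≤ B n ω := fun n ω => by
    rw [hB]; exact Real.rpow_nonneg (hsum_nn n ω) _
  have hBsq : ∀ n ω, B n ω ^ 2 = ∑ j ∈ Finset.range J, lam j * (b j n ω) ^ 2 := by
    intro n ω
    rw [hB, ← Real.rpow_natCast ((∑ j ∈ Finset.range J, lam j * (b j n ω) ^ 2) ^ ((1:ℝ)/2)) 2,
      ← Real.rpow_mul (hsum_nn n ω)]
    norm_num
  -- pointwise identity A * B = Σ_j lam_j a_j b_j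
  have hS0 : ∀ n ω, B n ω = 0 → ∀ j ∈ Finset.range J, lam j * a j n ω * b j n ω = 0 := by
    intro n ω h0 j hj
    have hsum0 : ∑ j ∈ Finset.range J, lam j * (b j n ω) ^ 2 = 0 := by
      rw [← hBsq, h0]; ring
    have hjz := (Finset.sum_eq_zero_iff_of_nonneg
      (fun j _ => mul_nonneg (hlam0 j) (sq_nonneg _))).1 hsum0 j hj
    rcases mul_eq_zero.1 hjz with h | h
    · simp [h]
    · have hb0 : b j n ω = 0 := by
        have := sq_eq_zero_iff.1 h
        exact this
      simp [hb0]
  have hAB : ∀ n ω, A n ω * B n ω = ∑ j ∈ Finset.range J, lam j * a j n ω * b j n ω := by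
    intro n ω
    by_cases h0 : B n ω = 0
    · rw [hA, if_pos h0, h0, mul_zero]
      exact (Finset.sum_eq_zero (hS0 n ω h0)).symm
    · rw [hA, if_neg h0, div_mul_cancel₀ _ h0]
  -- Part 3
  have part3 : ∀ ω, ∑ n ∈ Finset.range N, A n ω * B n ω
      = ∑ j ∈ Finset.range J, lam j * ∑ n ∈ Finset.range N, a j n ω * b j n ω := by
    intro ω
    simp_rw [hAB]
    rw [Finset.sum_comm]
    refine Finset.sum_congr rfl fun j _ => ?_
    rw [Finset.mul_sum]
    exact Finset.sum_congr rfl fun n _ => (mul_assoc _ _ _)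
  -- Part 1
  have hA2 : ∀ n ω, (A n ω)^2 ≤ ∑ j ∈ Finset.range J, lam j * (a j n ω)^2 := by
    intro n ω
    have hgnn : (0:ℝ) ≤ ∑ j ∈ Finset.range J, lam j * (a j n ω)^2 :=
      Finset.sum_nonneg fun j _ => mul_nonneg (hlam0 j) (sq_nonneg _)
    rw [hA]
    split_ifs with h0
    · simpa using hgnn
    · have hBpos : 0 < B n ω := lt_of_le_of_ne (hBnn n ω) (Ne.symm h0)
      rw [div_pow, div_le_iff₀ (by positivity), hBsq]
      exact Finset.sum_sq_le_sum_mul_sum_of_sq_eq_mul _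
        (fun j _ => mul_nonneg (hlam0 j) (sq_nonneg _))
        (fun j _ => mul_nonneg (hlam0 j) (sq_nonneg _))
        (fun j _ => by ring)
  have hg_int : ∀ n, Integrable (fun ω => ∑ j ∈ Finset.range J, lam j * (a j n ω)^2) μ :=
    fun n => integrable_finset_sum _ fun j _ => ((haL2 j n).integrable_sq).const_mul _
  have part1 : ∑ n ∈ Finset.range N, ∫ ω, (A n ω)^2 ∂μ ≤ 1 := by
    calc ∑ n ∈ Finset.range N, ∫ ω, (A n ω)^2 ∂μ
        ≤ ∑ n ∈ Finset.range N, ∫ ω, (∑ j ∈ Finset.range J, lam j * (a j n ω)^2) ∂μ := by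
          refine Finset.sum_le_sum fun n _ => ?_
          exact integral_mono_of_nonneg (Filter.Eventually.of_forall fun ω => sq_nonneg _)
            (hg_int n) (Filter.Eventually.of_forall fun ω => hA2 n ω)
      _ = ∑ n ∈ Finset.range N, ∑ j ∈ Finset.range J, lam j * ∫ ω, (a j n ω)^2 ∂μ := by
          refine Finset.sum_congr rfl fun n _ => ?_
          rw [integral_finset_sum _ fun j _ => ((haL2 j n).integrable_sq).const_mul _]
          exact Finset.sum_congr rfl fun j _ => integral_const_mul _ _
      _ = ∑ j ∈ Finset.range J, lam j * ∑ n ∈ Finset.range N, ∫ ω, (a j n ω)^2 ∂μ := by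
          rw [Finset.sum_comm]
          exact Finset.sum_congr rfl fun j _ => (Finset.mul_sum _ _ _).symm
      _ ≤ 1 := ha
  -- Part 2
  have part2 : eLpNorm (fun ω => (∑ n ∈ Finset.range N, (B n ω)^2) ^ ((1:ℝ)/2))
      (ENNReal.ofReal q) μ ≤ 1 := by
    by_cases hq : q = 0
    · simp [hq]
    · have hp_half : (1:ℝ)/2 ≤ 1/p := by
        rw [div_le_div_iff₀ (by norm_num) hp0]; linarith
      have hp_one : 1/p ≤ 1 := by rw [div_le_one hp0]; exact hp1
      have hqpos : 0 < q := by
        rcases lt_trichotomy q 0 with h | h | h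
        · exfalso
          have : 1/q < 0 := div_neg_of_pos_of_neg one_pos h
          linarith
        · exact absurd h hq
        · exact h
      have hq2 : (2:ℝ) ≤ q := by
        have h12 : 1/q ≤ 1/2 := by linarith
        rw [div_le_div_iff₀ hqpos (by norm_num)] at h12
        linarith
      have hmul : ENNReal.ofReal q * ENNReal.ofReal ((1:ℝ)/2) = ENNReal.ofReal (q/2) := by
        rw [← ENNReal.ofReal_mul (by linarith : (0:ℝ) ≤ q)]
        congr 1
        ring
      have hS_nn : ∀ j ω, (0:ℝ) ≤ ∑ n ∈ Finset.range N, (b j n ω)^2 :=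
        fun j ω => Finset.sum_nonneg fun n _ => sq_nonneg _
      have hSm : ∀ j, AEStronglyMeasurable (fun ω => ∑ n ∈ Finset.range N, (b j n ω)^2) μ := by
        intro j
        refine Finset.aestronglyMeasurable_fun_sum _ fun n _ => ?_
        have h1 : (fun ω => (b j n ω)^2) = fun ω => b j n ω * b j n ω := by
          funext ω; ring
        rw [h1]
        exact (hbLq j n).1.mul (hbLq j n).1
      have hSle : ∀ j ∈ Finset.range J,
          eLpNorm (fun ω => ∑ n ∈ Finset.range N, (b j n ω)^2) (ENNReal.ofReal (q/2)) μ ≤ 1 := by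
        intro j hj
        have h1 := hb j hj
        have hnorm : (fun ω => (∑ n ∈ Finset.range N, (b j n ω)^2) ^ ((1:ℝ)/2))
            = fun ω => ‖(∑ n ∈ Finset.range N, (b j n ω)^2)‖ ^ ((1:ℝ)/2) := by
          funext ω; rw [Real.norm_of_nonneg (hS_nn j ω)]
        rw [hnorm, eLpNorm_norm_rpow _ (by norm_num : (0:ℝ) < 1/2), hmul] at h1
        have h2 := ENNReal.rpow_le_rpow h1 (by norm_num : (0:ℝ) ≤ 2)
        rw [← ENNReal.rpow_mul, ENNReal.one_rpow] at h2
        norm_num at h2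
        exact h2
      have hHeq : (fun ω => (∑ n ∈ Finset.range N, (B n ω)^2) ^ ((1:ℝ)/2))
          = fun ω => ‖∑ j ∈ Finset.range J, lam j * ∑ n ∈ Finset.range N, (b j n ω)^2‖
              ^ ((1:ℝ)/2) := by
        funext ω
        have h1 : ∑ n ∈ Finset.range N, (B n ω)^2
            = ∑ j ∈ Finset.range J, lam j * ∑ n ∈ Finset.range N, (b j n ω)^2 := by
          simp_rw [hBsq]
          rw [Finset.sum_comm]
          exact Finset.sum_congr rfl fun j _ => (Finset.mul_sum _ _ _).symm
        rw [h1, Real.norm_of_nonneg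
          (Finset.sum_nonneg fun j _ => mul_nonneg (hlam0 j) (hS_nn j ω))]
      rw [hHeq, eLpNorm_norm_rpow _ (by norm_num : (0:ℝ) < 1/2), hmul]
      have hH : eLpNorm (fun ω => ∑ j ∈ Finset.range J,
          lam j * ∑ n ∈ Finset.range N, (b j n ω)^2) (ENNReal.ofReal (q/2)) μ ≤ 1 := by
        have hfun : (fun ω => ∑ j ∈ Finset.range J, lam j * ∑ n ∈ Finset.range N, (b j n ω)^2)
            = ∑ j ∈ Finset.range J,
                (lam j • fun ω => ∑ n ∈ Finset.range N, (b j n ω)^2) := by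
          funext ω
          simp [Finset.sum_apply, smul_eq_mul]
        rw [hfun]
        have hone : (1:ℝ≥0∞) ≤ ENNReal.ofReal (q/2) := by
          rw [← ENNReal.ofReal_one]
          exact ENNReal.ofReal_le_ofReal (by linarith)
        calc eLpNorm (∑ j ∈ Finset.range J,
                (lam j • fun ω => ∑ n ∈ Finset.range N, (b j n ω)^2)) (ENNReal.ofReal (q/2)) μ
            ≤ ∑ j ∈ Finset.range J, eLpNorm
                (lam j • fun ω => ∑ n ∈ Finset.range N, (b j n ω)^2) (ENNReal.ofReal (q/2)) μ :=
              eLpNorm_sum_le (fun j _ => (hSm j).const_smul _) hone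
          _ = ∑ j ∈ Finset.range J, ‖lam j‖ₑ * eLpNorm
                (fun ω => ∑ n ∈ Finset.range N, (b j n ω)^2) (ENNReal.ofReal (q/2)) μ := by
              exact Finset.sum_congr rfl fun j _ => eLpNorm_const_smul _ _ _ _
          _ ≤ ∑ j ∈ Finset.range J, ENNReal.ofReal (lam j) * 1 := by
              refine Finset.sum_le_sum fun j hj => ?_
              rw [Real.enorm_eq_ofReal (hlam0 j)]
              exact mul_le_mul_right (hSle j hj) _
          _ = 1 := by
              simp only [mul_one]
              rw [← ENNReal.ofReal_sum_of_nonneg fun j _ => hlam0 j, hlam1, ENNReal.ofReal_one]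
      exact ENNReal.rpow_le_one hH (by norm_num)
  exact ⟨part1, part2, part3⟩
end
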